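/- For all nonnegative integers n and j, the Chebyshev-Stirling number of the second kind satisfies {n brace j}_{1/2} = (1/(2j)!) Σ_{r=0}^{2j} (-1)^r C(2j,r) (j-r)^{2n}. -/

import Mathlib

noncomputable def CS : ℕ → ℕ → ℝ
  | 0, 0 => 1
  | 0, _ + 1 => 0
  | _ + 1, 0 => 0
  | n + 1, j + 1 => CS n j + ((j:ℝ) + 1) ^ 2 * CS n (j + 1)

lemma nat_coeff (j s : ℕ) :
    (2*j+2).choose (s+1) * (s+1) * (2*j+2 - (s+1)) = (2*j+2)*((2*j+1)*((2*j).choose s)) := by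
  have h1 : (2*j+2).choose (s+1) * (s+1) = (2*j+2) * ((2*j+1).choose s) := by
    rw [mul_comm (2*j+2) _, ← Nat.add_one_mul_choose_eq]; ring
  have h2 : (2*j+1).choose s * (2*j+1 - s) = (2*j+1) * ((2*j).choose s) := by
    rw [← Nat.choose_succ_right_eq, mul_comm (2*j+1) _, ← Nat.add_one_mul_choose_eq]
    ring
  have h3 : 2*j+2 - (s+1) = 2*j+1 - s := by omega
  rw [h3, h1, mul_assoc, h2]

lemma key (n j : ℕ) :
    ∑ r ∈ Finset.range (2*j+3), (-1:ℝ)^r * ((2*j+2).choose r) * (((j:ℝ)+1) - r)^(2*(n+1))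
    = (2*(j:ℝ)+2)*(2*(j:ℝ)+1) *
        ∑ r ∈ Finset.range (2*j+1), (-1:ℝ)^r * ((2*j).choose r) * ((j:ℝ) - r)^(2*n)
      + ((j:ℝ)+1)^2 *
        ∑ r ∈ Finset.range (2*j+3), (-1:ℝ)^r * ((2*j+2).choose r) * (((j:ℝ)+1) - r)^(2*n) := by
  have claimA : ∑ r ∈ Finset.range (2*j+3), (-1:ℝ)^r * ((2*j+2).choose r) * (((j:ℝ)+1) - r)^(2*(n+1))
      = ((j:ℝ)+1)^2 * ∑ r ∈ Finset.range (2*j+3), (-1:ℝ)^r * ((2*j+2).choose r) * (((j:ℝ)+1) - r)^(2*n)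
        - ∑ r ∈ Finset.range (2*j+3), (-1:ℝ)^r * ((((2*j+2).choose r * r * (2*j+2 - r) : ℕ)):ℝ) * (((j:ℝ)+1) - r)^(2*n) := by
    rw [Finset.mul_sum, ← Finset.sum_sub_distrib]
    apply Finset.sum_congr rfl
    intro r hr
    have hr' : r ≤ 2*j+2 := by
      have := Finset.mem_range.mp hr; omega
    have hc : ((2*j+2 - r : ℕ) : ℝ) = (2*(j:ℝ)+2) - r := by
      push_cast [hr']; ring
    have hexp : (((j:ℝ)+1) - r)^(2*(n+1)) = (((j:ℝ)+1) - r)^(2*n) * (((j:ℝ)+1) - r)^2 := by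
      rw [← pow_add]; ring_nf
    rw [hexp]
    push_cast [hc]
    ring
  have claimB : ∑ r ∈ Finset.range (2*j+3), (-1:ℝ)^r * ((((2*j+2).choose r * r * (2*j+2 - r) : ℕ)):ℝ) * (((j:ℝ)+1) - r)^(2*n)
      = -((2*(j:ℝ)+2)*(2*(j:ℝ)+1) *
          ∑ s ∈ Finset.range (2*j+1), (-1:ℝ)^s * ((2*j).choose s) * ((j:ℝ) - s)^(2*n)) := by
    rw [Finset.sum_range_succ' _ (2*j+2)]
    have h0 : (-1:ℝ)^0 * ((((2*j+2).choose 0 * 0 * (2*j+2 - 0) : ℕ)):ℝ) * (((j:ℝ)+1) - ((0:ℕ):ℝ))^(2*n) = 0 := by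
      norm_num
    rw [h0, add_zero]
    have hcongr : ∑ s ∈ Finset.range (2*j+2),
        (-1:ℝ)^(s+1) * ((((2*j+2).choose (s+1) * (s+1) * (2*j+2 - (s+1)) : ℕ)):ℝ) * (((j:ℝ)+1) - (((s:ℕ)+1:ℕ):ℝ))^(2*n)
        = ∑ s ∈ Finset.range (2*j+2),
          (-((2*(j:ℝ)+2)*(2*(j:ℝ)+1))) * ((-1:ℝ)^s * ((2*j).choose s) * ((j:ℝ) - s)^(2*n)) := by
      apply Finset.sum_congr rfl
      intro s _
      rw [nat_coeff]
      push_cast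
      ring
    rw [hcongr, ← Finset.mul_sum, Finset.sum_range_succ]
    have hz : ((2*j).choose (2*j+1) : ℝ) = 0 := by
      rw [Nat.choose_eq_zero_of_lt (by omega)]; norm_num
    rw [hz]
    ring
  rw [claimA, claimB]
  ring

theorem cs_single_sum (n j : ℕ) :
    CS n j = (1 / (Nat.factorial (2 * j) : ℝ)) *
      ∑ r ∈ Finset.range (2 * j + 1),
        (-1 : ℝ) ^ r * (Nat.choose (2 * j) r) * ((j : ℝ) - r) ^ (2 * n) := by
  induction n generalizing j with
  | zero =>
    cases j with
    | zero => simp [CS]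
    | succ k =>
      have halt := Int.alternating_sum_range_choose (n := 2*k+2)
      rw [if_neg (by omega)] at halt
      have halt' : (∑ i ∈ Finset.range (2*k+2+1), (-1:ℝ)^i * ((2*k+2).choose i)) = 0 := by
        exact_mod_cast congrArg (Int.cast : ℤ → ℝ) halt
      show CS 0 (k+1) = _
      rw [show CS 0 (k+1) = 0 from rfl]
      simp only [Nat.mul_zero, pow_zero, mul_one]
      rw [show 2*(k+1)+1 = 2*k+2+1 by ring, show 2*(k+1) = 2*k+2 by ring, halt']
      ring
  | succ n ih =>
    cases j with
    | zero =>
      rw [show CS (n+1) 0 = 0 from rfl]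
      norm_num
    | succ k =>
      rw [show CS (n+1) (k+1) = CS n k + ((k:ℝ) + 1) ^ 2 * CS n (k + 1) from rfl,
        ih k, ih (k+1)]
      have hk := key n k
      have e1 : 2*(k+1)+1 = 2*k+3 := by ring
      have e2 : 2*(k+1) = 2*k+2 := by ring
      have e3 : ((k+1 : ℕ):ℝ) = (k:ℝ)+1 := by push_cast; ring
      rw [e1, e2, e3] at *
      rw [hk]
      have hfac : ((2*k+2).factorial : ℝ) = (2*(k:ℝ)+2)*(2*(k:ℝ)+1)*((2*k).factorial : ℝ) := by
        rw [show 2*k+2 = (2*k+1)+1 by ring, Nat.factorial_succ, Nat.factorial_succ]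
        push_cast
        ring
      have h1 : ((2*k).factorial : ℝ) ≠ 0 := by positivity
      have h2 : (2*(k:ℝ)+2)*(2*(k:ℝ)+1) ≠ 0 := by positivity
      rw [hfac]
      field_simp
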